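/- Let k ≥ 2 and let B_k be the braid group on k strands, i.e. the group presented by generators σ₁, …, σ_{k−1} subject to the relations σᵢσⱼ = σⱼσᵢ for |i − j| ≥ 2 and σᵢσᵢ₊₁σᵢ = σᵢ₊₁σᵢσᵢ₊₁. Define β ∈ B_k by β := ∏_{j=1}^{k/2} (σ_{2j−1}·σ_{2j−2}·⋯·σ₁) if k is even, and β := ∏_{j=1}^{(k−1)/2} (σ_{2j}·σ_{2j−1}·⋯·σ₁) if k is odd (outer products in increasing j, each inner product with descending indices). If k is even set ω₁ := the product of the σ_i over all odd i with 1 ≤ i ≤ k−1 and ω₂ := the product of the σ_i over all even i with 2 ≤ i ≤ k−2; if k is odd set ω₁ := the product of the σ_i over all even i with 2 ≤ i ≤ k−1 and ω₂ := the product of the σ_i over all odd i with 1 ≤ i ≤ k−2 (in each case the factors pairwise commute, so the order is immaterial). Then β can be written as an alternating product starting with ω₁ — that is, β = (ω₁ω₂)^m or β = (ω₁ω₂)^m·ω₁ for some integer m ≥ 0 — if and only if k = 2 or k = 3. -/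

import Mathlib

/-- The braid relations, as a set of relators in the free group on `m` generators
`σ₁, …, σ_m` (indexed by `Fin m`): `σᵢσⱼ = σⱼσᵢ` for `|i - j| ≥ 2` and
`σᵢσᵢ₊₁σᵢ = σᵢ₊₁σᵢσᵢ₊₁`. -/
def braidRels (m : ℕ) : Set (FreeGroup (Fin m)) :=
  {r | ∃ i j : Fin m, ((i : ℕ) + 2 ≤ (j : ℕ) ∨ (j : ℕ) + 2 ≤ (i : ℕ)) ∧
        r = FreeGroup.of i * FreeGroup.of j * (FreeGroup.of j * FreeGroup.of i)⁻¹} ∪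
  {r | ∃ i j : Fin m, (j : ℕ) = (i : ℕ) + 1 ∧
        r = FreeGroup.of i * FreeGroup.of j * FreeGroup.of i *
            (FreeGroup.of j * FreeGroup.of i * FreeGroup.of j)⁻¹}

/-- The generator `σ_i` (for `1 ≤ i ≤ k - 1`) of the braid group `B_k` on `k` strands,
presented with `k - 1` generators and the braid relations. -/
def sigmaGen (k i : ℕ) : PresentedGroup (braidRels (k - 1)) :=
  if h : 1 ≤ i ∧ i ≤ k - 1 then PresentedGroup.of ⟨i - 1, by omega⟩ else 1

/-- The descending product `σ_t · σ_{t-1} · ⋯ · σ_s` in `B_k`. -/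
def descSigma (k t s : ℕ) : PresentedGroup (braidRels (k - 1)) :=
  ((List.range' s (t + 1 - s)).reverse.map (sigmaGen k)).prod

/-- The braid `β ∈ B_k` of the paper:
`β = ∏_{j=1}^{k/2} (σ_{2j-1} σ_{2j-2} ⋯ σ₁)` for `k` even, and
`β = ∏_{j=1}^{(k-1)/2} (σ_{2j} σ_{2j-1} ⋯ σ₁)` for `k` odd. -/
def betaBraid (k : ℕ) : PresentedGroup (braidRels (k - 1)) :=
  if k % 2 = 0 then ((List.range (k / 2)).map (fun j => descSigma k (2 * j + 1) 1)).prod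
  else ((List.range (k / 2)).map (fun j => descSigma k (2 * j + 2) 1)).prod

/-- `ω₁ ∈ B_k`: the product of the `σ_i` over all odd `i` with `1 ≤ i ≤ k - 1` for `k`
even, and over all even `i` with `2 ≤ i ≤ k - 1` for `k` odd. -/
def omegaOne (k : ℕ) : PresentedGroup (braidRels (k - 1)) :=
  if k % 2 = 0 then ((List.range (k / 2)).map (fun m => sigmaGen k (2 * m + 1))).prod
  else ((List.range (k / 2)).map (fun m => sigmaGen k (2 * m + 2))).prod

/-- `ω₂ ∈ B_k`: the product of the `σ_i` over all even `i` with `2 ≤ i ≤ k - 2` for `k`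
even, and over all odd `i` with `1 ≤ i ≤ k - 2` for `k` odd. -/
def omegaTwo (k : ℕ) : PresentedGroup (braidRels (k - 1)) :=
  if k % 2 = 0 then ((List.range (k / 2 - 1)).map (fun m => sigmaGen k (2 * m + 2))).prod
  else ((List.range (k / 2)).map (fun m => sigmaGen k (2 * m + 1))).prod

/-! ### Auxiliary homomorphisms -/

private lemma swap_braid_comm (i j : ℕ) (h : i + 2 ≤ j ∨ j + 2 ≤ i) :
    Equiv.swap (i+1) (i+2) * Equiv.swap (j+1) (j+2)
      = Equiv.swap (j+1) (j+2) * Equiv.swap (i+1) (i+2) := by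
  ext x
  simp only [Equiv.Perm.mul_apply, Equiv.swap_apply_def]
  split_ifs <;> omega

private lemma swap_braid_rel (i : ℕ) :
    Equiv.swap (i+1) (i+2) * Equiv.swap (i+2) (i+3) * Equiv.swap (i+1) (i+2) =
    Equiv.swap (i+2) (i+3) * Equiv.swap (i+1) (i+2) * Equiv.swap (i+2) (i+3) := by
  rw [Equiv.swap_comm (i+1) (i+2), Equiv.swap_comm (i+2) (i+3),
    Equiv.swap_mul_swap_mul_swap (by omega) (by omega),
    Equiv.swap_comm (i+3) (i+2), Equiv.swap_comm (i+2) (i+1),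
    Equiv.swap_mul_swap_mul_swap (by omega) (by omega), Equiv.swap_comm]

/-- The homomorphism from the braid group to permutations of `ℕ`, `σ_i ↦ (i, i+1)`. -/
def braidPerm (m : ℕ) : PresentedGroup (braidRels m) →* Equiv.Perm ℕ :=
  PresentedGroup.toGroup
    (f := fun i : Fin m => Equiv.swap ((i : ℕ) + 1) ((i : ℕ) + 2)) (by
    rintro r (⟨i, j, hij, rfl⟩ | ⟨i, j, hij, rfl⟩) <;>
      simp only [map_mul, map_inv, FreeGroup.lift_apply_of] <;> rw [mul_inv_eq_one]
    · exact swap_braid_comm _ _ hij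
    · rw [hij]
      exact swap_braid_rel _)

/-- The length (abelianization) homomorphism, `σ_i ↦ 1 ∈ ℤ`. -/
def lenHom (m : ℕ) : PresentedGroup (braidRels m) →* Multiplicative ℤ :=
  PresentedGroup.toGroup
    (f := fun _ : Fin m => Multiplicative.ofAdd (1 : ℤ)) (by
    rintro r (⟨i, j, hij, rfl⟩ | ⟨i, j, hij, rfl⟩) <;>
      simp only [map_mul, map_inv, FreeGroup.lift_apply_of] <;> group)

lemma braidPerm_sigmaGen {k i : ℕ} (h1 : 1 ≤ i) (h2 : i ≤ k - 1) :
    braidPerm (k - 1) (sigmaGen k i) = Equiv.swap i (i + 1) := by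
  rw [sigmaGen, dif_pos ⟨h1, h2⟩, braidPerm, PresentedGroup.toGroup.of]
  congr 1 <;> simp <;> omega

lemma lenHom_sigmaGen {k i : ℕ} (h1 : 1 ≤ i) (h2 : i ≤ k - 1) :
    lenHom (k - 1) (sigmaGen k i) = Multiplicative.ofAdd (1 : ℤ) := by
  rw [sigmaGen, dif_pos ⟨h1, h2⟩, lenHom, PresentedGroup.toGroup.of]

/-! ### Evaluation of products of permutations -/

lemma prod_apply_of_fixed : ∀ (l : List (Equiv.Perm ℕ)) (x : ℕ),
    (∀ g ∈ l, g x = x) → l.prod x = x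
  | [], _, _ => rfl
  | g :: l, x, h => by
    simp only [List.prod_cons, Equiv.Perm.mul_apply]
    rw [prod_apply_of_fixed l x (fun p hp => h p (List.mem_cons_of_mem _ hp)),
      h g List.mem_cons_self]

lemma prod_apply_single (l₁ l₂ : List (Equiv.Perm ℕ)) (g : Equiv.Perm ℕ) (x : ℕ)
    (h₂ : ∀ p ∈ l₂, p x = x) (h₁ : ∀ p ∈ l₁, p (g x) = g x) :
    (l₁ ++ g :: l₂).prod x = g x := by
  rw [List.prod_append, List.prod_cons]
  simp only [Equiv.Perm.mul_apply]
  rw [prod_apply_of_fixed l₂ x h₂, prod_apply_of_fixed l₁ (g x) h₁]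

lemma prod_range_apply (F : ℕ → Equiv.Perm ℕ) (n j : ℕ) (hj : j < n) (x : ℕ)
    (h₁ : ∀ i, i < j → F i (F j x) = F j x) (h₂ : ∀ i, j < i → i < n → F i x = x) :
    ((List.range n).map F).prod x = F j x := by
  have hsplit : List.range n = List.range' 0 j ++ j :: List.range' (j + 1) (n - j - 1) := by
    rw [List.range_eq_range', show n = (n - j) + j by omega,
      show List.range' 0 (n - j + j) = List.range' 0 (j + (n - j)) by rw [Nat.add_comm],
      ← List.range'_append (s := 0) (m := j) (n := n-j) (step := 1)]
    congr 1
    rw [show 0 + 1 * j = j by omega, show n - j = (n - j - 1) + 1 by omega, List.range'_succ]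
    congr 2
    omega
  rw [hsplit, List.map_append, List.map_cons]
  apply prod_apply_single
  · intro p hp
    simp only [List.mem_map, List.mem_range'_1] at hp
    obtain ⟨i, hi, rfl⟩ := hp
    exact h₂ i (by omega) (by omega)
  · intro p hp
    simp only [List.mem_map, List.mem_range'_1] at hp
    obtain ⟨i, hi, rfl⟩ := hp
    exact h₁ i (by omega)

lemma prod_range_apply_fixed (F : ℕ → Equiv.Perm ℕ) (n : ℕ) (x : ℕ)
    (h : ∀ i, i < n → F i x = x) :
    ((List.range n).map F).prod x = x := by
  apply prod_apply_of_fixed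
  intro p hp
  simp only [List.mem_map, List.mem_range] at hp
  obtain ⟨i, hi, rfl⟩ := hp
  exact h i hi

/-! ### Facts about `descSigma` -/

lemma descSigma_rev (t : ℕ) :
    (List.range' 1 (t + 1)).reverse = (t + 1) :: (List.range' 1 t).reverse := by
  rw [← List.range'_append (s := 1) (m := t) (n := 1) (step := 1), List.range'_one]
  simp only [List.reverse_append, List.reverse_singleton, List.singleton_append]
  congr 1
  omega

lemma braidPerm_descSigma_fix {k t x : ℕ} (ht : t ≤ k - 1) (hx : t + 1 < x) :
    braidPerm (k - 1) (descSigma k t 1) x = x := by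
  rw [descSigma, map_list_prod, List.map_map]
  apply prod_apply_of_fixed
  intro p hp
  simp only [List.mem_map, List.mem_reverse, List.mem_range'_1, Function.comp_apply] at hp
  obtain ⟨i, hi, rfl⟩ := hp
  rw [braidPerm_sigmaGen (by omega) (by omega)]
  exact Equiv.swap_apply_of_ne_of_ne (by omega) (by omega)

lemma braidPerm_descSigma_top {k t : ℕ} (h1 : 1 ≤ t) (ht : t ≤ k - 1) :
    braidPerm (k - 1) (descSigma k t 1) (t + 1) = t := by
  obtain ⟨s, rfl⟩ : ∃ s, t = s + 1 := ⟨t - 1, by omega⟩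
  rw [descSigma, show s + 1 + 1 - 1 = s + 1 from rfl, descSigma_rev, List.map_cons,
    map_list_prod, List.map_cons, List.prod_cons]
  simp only [Equiv.Perm.mul_apply]
  rw [List.map_map]
  have hfix : (((List.range' 1 s).reverse.map
      ((braidPerm (k-1)) ∘ (sigmaGen k))).prod) (s + 1 + 1) = s + 1 + 1 := by
    apply prod_apply_of_fixed
    intro p hp
    simp only [List.mem_map, List.mem_reverse, List.mem_range'_1, Function.comp_apply] at hp
    obtain ⟨i, hi, rfl⟩ := hp
    rw [braidPerm_sigmaGen (by omega) (by omega)]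
    exact Equiv.swap_apply_of_ne_of_ne (by omega) (by omega)
  rw [hfix, braidPerm_sigmaGen (by omega) (by omega), Equiv.swap_apply_right]

/-! ### Lengths -/

lemma prod_ofAdd (f : ℕ → ℤ) (n : ℕ) :
    ((List.range n).map (fun j => Multiplicative.ofAdd (f j))).prod
      = Multiplicative.ofAdd (∑ j ∈ Finset.range n, f j) := by
  induction n with
  | zero => simp
  | succ n ih =>
      rw [List.range_succ, List.map_append, List.prod_append, ih, Finset.sum_range_succ,
        ofAdd_add]
      simp

lemma lenHom_descSigma {k t : ℕ} (ht : t ≤ k - 1) :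
    lenHom (k - 1) (descSigma k t 1) = Multiplicative.ofAdd (t : ℤ) := by
  induction t with
  | zero => simp [descSigma, lenHom]
  | succ s ih =>
      rw [descSigma, show s + 1 + 1 - 1 = s + 1 from rfl, descSigma_rev, List.map_cons,
        List.prod_cons, map_mul, lenHom_sigmaGen (by omega) (by omega)]
      have : lenHom (k-1) (((List.range' 1 s).reverse.map (sigmaGen k)).prod)
          = Multiplicative.ofAdd (s : ℤ) := by
        have := ih (by omega)
        rwa [descSigma, show s + 1 - 1 = s from rfl] at this
      rw [this, ← ofAdd_add]
      congr 1
      push_cast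
      ring

/-! ### Arithmetic helpers -/

lemma sum_odd (n : ℕ) : (∑ j ∈ Finset.range n, (2 * (j : ℤ) + 1)) = (n : ℤ) ^ 2 := by
  induction n with
  | zero => simp
  | succ n ih => rw [Finset.sum_range_succ, ih]; push_cast; ring

lemma sum_even (n : ℕ) : (∑ j ∈ Finset.range n, (2 * (j : ℤ) + 2)) = (n : ℤ) ^ 2 + n := by
  induction n with
  | zero => simp
  | succ n ih => rw [Finset.sum_range_succ, ih]; push_cast; ring


/-! ### Length computations for the main players -/

lemma lenHom_list_sigma {k : ℕ} (n : ℕ) (a : ℕ → ℕ)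
    (h : ∀ m < n, 1 ≤ a m ∧ a m ≤ k - 1) :
    lenHom (k - 1) (((List.range n).map (fun m => sigmaGen k (a m))).prod)
      = Multiplicative.ofAdd (n : ℤ) := by
  rw [map_list_prod, List.map_map]
  rw [List.map_congr_left (g := fun _ => Multiplicative.ofAdd (1 : ℤ)) (by
    intro m hm
    simp only [Function.comp_apply]
    exact lenHom_sigmaGen (h m (List.mem_range.mp hm)).1 (h m (List.mem_range.mp hm)).2)]
  rw [prod_ofAdd]
  simp

theorem stmt_14 (k : ℕ) (hk : 2 ≤ k) :
    (∃ m : ℕ, betaBraid k = (omegaOne k * omegaTwo k) ^ m ∨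
        betaBraid k = (omegaOne k * omegaTwo k) ^ m * omegaOne k) ↔
      (k = 2 ∨ k = 3) := by
  constructor
  · rintro ⟨m, hcase⟩
    by_contra hne
    push_neg at hne
    have hk4 : 4 ≤ k := by omega
    by_cases h2 : k % 2 = 0
    · -- k even, k = 2n, n ≥ 2
      obtain ⟨n, hkn⟩ : ∃ n, k = 2 * n := ⟨k / 2, by omega⟩
      have hdiv : k / 2 = n := by omega
      have hn2 : 2 ≤ n := by omega
      -- lengths
      have lb : lenHom (k-1) (betaBraid k) = Multiplicative.ofAdd ((n : ℤ)^2) := by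
        rw [betaBraid, if_pos h2, hdiv, map_list_prod, List.map_map]
        have hmap : List.map ((lenHom (k-1)) ∘ fun j => descSigma k (2*j+1) 1)
            (List.range n) = List.map (fun j : ℕ => Multiplicative.ofAdd (2*(j:ℤ)+1))
            (List.range n) := by
          apply List.map_congr_left
          intro j hj
          have hj' : j < n := List.mem_range.mp hj
          simp only [Function.comp_apply]
          rw [lenHom_descSigma (by omega)]
          congr 1
          try push_cast
          try ring
        rw [hmap, prod_ofAdd, sum_odd]
      have lo1 : lenHom (k-1) (omegaOne k) = Multiplicative.ofAdd (n : ℤ) := by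
        rw [omegaOne, if_pos h2, hdiv]
        exact lenHom_list_sigma n _ (fun m hm =>
          ⟨by show 1 ≤ 2*m+1; omega, by show 2*m+1 ≤ k-1; omega⟩)
      have lo2 : lenHom (k-1) (omegaTwo k) = Multiplicative.ofAdd (((n:ℤ) - 1)) := by
        rw [omegaTwo, if_pos h2, hdiv]
        rw [lenHom_list_sigma (n-1) _ (fun m hm =>
          ⟨by show 1 ≤ 2*m+2; omega, by show 2*m+2 ≤ k-1; omega⟩)]
        congr 1
        omega
      rcases hcase with h | h
      · have h' := congrArg (lenHom (k-1)) h
        rw [map_pow, map_mul, lo1, lo2, ← ofAdd_add, ← ofAdd_nsmul, lb] at h'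
        have heq : (n:ℤ)^2 = m • ((n:ℤ) + ((n:ℤ) - 1)) := Multiplicative.ofAdd.injective h'
        rw [nsmul_eq_mul] at heq
        have hd : (2*(n:ℤ) - 1) ∣ 1 := ⟨4*(m:ℤ) - 2*n - 1, by linear_combination 4*heq⟩
        have hle := Int.le_of_dvd one_pos hd
        have : (2:ℤ) ≤ (n:ℤ) := by exact_mod_cast hn2
        linarith
      · have h' := congrArg (lenHom (k-1)) h
        rw [map_mul, map_pow, map_mul, lo1, lo2, ← ofAdd_add, ← ofAdd_nsmul,
          ← ofAdd_add, lb] at h'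
        have heq : (n:ℤ)^2 = m • ((n:ℤ) + ((n:ℤ) - 1)) + n :=
          Multiplicative.ofAdd.injective h'
        rw [nsmul_eq_mul] at heq
        have hd : (2*(n:ℤ) - 1) ∣ 1 := ⟨2*(n:ℤ) - 1 - 4*m, by linear_combination -4*heq⟩
        have hle := Int.le_of_dvd one_pos hd
        have : (2:ℤ) ≤ (n:ℤ) := by exact_mod_cast hn2
        linarith
    · -- k odd, k = 2n+1, n ≥ 2
      have h2' : k % 2 = 1 := by omega
      obtain ⟨n, hkn⟩ : ∃ n, k = 2 * n + 1 := ⟨k / 2, by omega⟩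
      have hdiv : k / 2 = n := by omega
      have hn2 : 2 ≤ n := by omega
      -- lengths
      have lb : lenHom (k-1) (betaBraid k) = Multiplicative.ofAdd ((n : ℤ)^2 + n) := by
        rw [betaBraid, if_neg (by omega), hdiv, map_list_prod, List.map_map]
        have hmap : List.map ((lenHom (k-1)) ∘ fun j => descSigma k (2*j+2) 1)
            (List.range n) = List.map (fun j : ℕ => Multiplicative.ofAdd (2*(j:ℤ)+2))
            (List.range n) := by
          apply List.map_congr_left
          intro j hj
          have hj' : j < n := List.mem_range.mp hj
          simp only [Function.comp_apply]
          rw [lenHom_descSigma (by omega)]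
          congr 1
          try push_cast
          try ring
        rw [hmap, prod_ofAdd, sum_even]
      have lo1 : lenHom (k-1) (omegaOne k) = Multiplicative.ofAdd (n : ℤ) := by
        rw [omegaOne, if_neg (by omega), hdiv]
        exact lenHom_list_sigma n _ (fun m hm =>
          ⟨by show 1 ≤ 2*m+2; omega, by show 2*m+2 ≤ k-1; omega⟩)
      have lo2 : lenHom (k-1) (omegaTwo k) = Multiplicative.ofAdd (n : ℤ) := by
        rw [omegaTwo, if_neg (by omega), hdiv]
        exact lenHom_list_sigma n _ (fun m hm =>
          ⟨by show 1 ≤ 2*m+1; omega, by show 2*m+1 ≤ k-1; omega⟩)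
      -- permutations
      have hb : braidPerm (k-1) (betaBraid k) (2*n+1) = 2*n := by
        rw [betaBraid, if_neg (by omega), hdiv, map_list_prod, List.map_map]
        have hval : ((braidPerm (k-1)) ∘ fun j => descSigma k (2*j+2) 1) (n-1) (2*n+1)
            = 2*n := by
          simp only [Function.comp_apply]
          rw [show 2*(n-1)+2 = 2*n by omega]
          exact braidPerm_descSigma_top (by omega) (by omega)
        rw [prod_range_apply _ n (n-1) (by omega) (2*n+1) (by
            intro i hi
            rw [hval]
            simp only [Function.comp_apply]
            exact braidPerm_descSigma_fix (by omega) (by omega))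
          (by intro i hi1 hi2; exact absurd hi2 (by omega))]
        exact hval
      have ho1 : ∀ j, j < n → braidPerm (k-1) (omegaOne k) (2*j+3) = 2*j+2 := by
        intro j hj
        rw [omegaOne, if_neg (by omega), hdiv, map_list_prod, List.map_map]
        have hval : ((braidPerm (k-1)) ∘ fun m => sigmaGen k (2*m+2)) j (2*j+3) = 2*j+2 := by
          simp only [Function.comp_apply]
          rw [braidPerm_sigmaGen (by omega) (by omega)]
          exact Equiv.swap_apply_right _ _
        rw [prod_range_apply _ n j hj (2*j+3) (by
            intro i hi
            rw [hval]
            simp only [Function.comp_apply]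
            rw [braidPerm_sigmaGen (by omega) (by omega)]
            exact Equiv.swap_apply_of_ne_of_ne (by omega) (by omega))
          (by
            intro i hi1 hi2
            simp only [Function.comp_apply]
            rw [braidPerm_sigmaGen (by omega) (by omega)]
            exact Equiv.swap_apply_of_ne_of_ne (by omega) (by omega))]
        exact hval
      have ho2 : ∀ j, j < n → braidPerm (k-1) (omegaTwo k) (2*j+2) = 2*j+1 := by
        intro j hj
        rw [omegaTwo, if_neg (by omega), hdiv, map_list_prod, List.map_map]
        have hval : ((braidPerm (k-1)) ∘ fun m => sigmaGen k (2*m+1)) j (2*j+2) = 2*j+1 := by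
          simp only [Function.comp_apply]
          rw [braidPerm_sigmaGen (by omega) (by omega)]
          exact Equiv.swap_apply_right _ _
        rw [prod_range_apply _ n j hj (2*j+2) (by
            intro i hi
            rw [hval]
            simp only [Function.comp_apply]
            rw [braidPerm_sigmaGen (by omega) (by omega)]
            exact Equiv.swap_apply_of_ne_of_ne (by omega) (by omega))
          (by
            intro i hi1 hi2
            simp only [Function.comp_apply]
            rw [braidPerm_sigmaGen (by omega) (by omega)]
            exact Equiv.swap_apply_of_ne_of_ne (by omega) (by omega))]
        exact hval
      have ho2top : braidPerm (k-1) (omegaTwo k) (2*n+1) = 2*n+1 := by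
        rw [omegaTwo, if_neg (by omega), hdiv, map_list_prod, List.map_map]
        apply prod_range_apply_fixed
        intro i hi
        simp only [Function.comp_apply]
        rw [braidPerm_sigmaGen (by omega) (by omega)]
        exact Equiv.swap_apply_of_ne_of_ne (by omega) (by omega)
      have ho1top : braidPerm (k-1) (omegaOne k) (2*n+1) = 2*n := by
        have := ho1 (n-1) (by omega)
        rw [show 2*(n-1)+3 = 2*n+1 by omega, show 2*(n-1)+2 = 2*n by omega] at this
        exact this
      set c : Equiv.Perm ℕ := braidPerm (k-1) (omegaOne k) * braidPerm (k-1) (omegaTwo k)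
        with hc
      have hcstep : ∀ e, 2 ≤ e → e ≤ n → c (2*e) = 2*e - 2 := by
        intro e he2 hen
        have h2e : braidPerm (k-1) (omegaTwo k) (2*e) = 2*e - 1 := by
          have := ho2 (e-1) (by omega)
          rw [show 2*(e-1)+2 = 2*e by omega, show 2*(e-1)+1 = 2*e-1 by omega] at this
          exact this
        have h1e : braidPerm (k-1) (omegaOne k) (2*e-1) = 2*e-2 := by
          have := ho1 (e-2) (by omega)
          rw [show 2*(e-2)+3 = 2*e-1 by omega, show 2*(e-2)+2 = 2*e-2 by omega] at this
          exact this
        rw [hc]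
        simp only [Equiv.Perm.mul_apply]
        rw [h2e, h1e]
      have hpow : ∀ i e, i < e → e ≤ n → (c ^ i) (2*e) = 2*(e - i) := by
        intro i
        induction i with
        | zero => intro e _ _; simp
        | succ i ih =>
            intro e hie hen
            rw [pow_succ]
            simp only [Equiv.Perm.mul_apply]
            rw [hcstep e (by omega) hen, show 2*e - 2 = 2*(e-1) by omega,
              ih (e-1) (by omega) (by omega)]
            congr 1
            omega
      rcases hcase with h | h
      · -- β = (ω₁ω₂)^m;  length: n² + n = 2nm so n + 1 = 2m
        have h' := congrArg (lenHom (k-1)) h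
        rw [map_pow, map_mul, lo1, lo2, ← ofAdd_add, ← ofAdd_nsmul, lb] at h'
        have heq : (n:ℤ)^2 + n = m • ((n:ℤ) + n) := Multiplicative.ofAdd.injective h'
        rw [nsmul_eq_mul] at heq
        have hm2 : 2 * m = n + 1 := by
          have hnz : (n:ℤ) ≠ 0 := by positivity
          have hmm : (n:ℤ) * (2 * m) = (n:ℤ) * (n + 1) := by linear_combination -heq
          have := mul_left_cancel₀ hnz hmm
          exact_mod_cast this
        have hm1 : 1 ≤ m := by omega
        have hperm := congrArg (fun g => braidPerm (k-1) g (2*n+1)) h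
        simp only [map_pow, map_mul] at hperm
        rw [hb] at hperm
        have hc1 : c (2*n+1) = 2*n := by
          rw [hc]
          simp only [Equiv.Perm.mul_apply]
          rw [ho2top, ho1top]
        have hcm : ((c : Equiv.Perm ℕ) ^ m) (2*n+1) = 2*(n - (m-1)) := by
          rw [show m = (m-1) + 1 by omega, pow_succ]
          simp only [Equiv.Perm.mul_apply]
          rw [hc1, hpow (m-1) n (by omega) (by omega)]
          omega
        rw [hcm] at hperm
        omega
      · -- β = (ω₁ω₂)^m ω₁;  length: n² + n = 2nm + n so n = 2m
        have h' := congrArg (lenHom (k-1)) h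
        rw [map_mul, map_pow, map_mul, lo1, lo2, ← ofAdd_add, ← ofAdd_nsmul,
          ← ofAdd_add, lb] at h'
        have heq : (n:ℤ)^2 + n = m • ((n:ℤ) + n) + n := Multiplicative.ofAdd.injective h'
        rw [nsmul_eq_mul] at heq
        have hm2 : 2 * m = n := by
          have hnz : (n:ℤ) ≠ 0 := by positivity
          have hmm : (n:ℤ) * (2 * m) = (n:ℤ) * (n:ℤ) := by linear_combination -heq
          have := mul_left_cancel₀ hnz hmm
          exact_mod_cast this
        have hperm := congrArg (fun g => braidPerm (k-1) g (2*n+1)) h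
        simp only [map_pow, map_mul] at hperm
        rw [hb] at hperm
        have hcm : (((c : Equiv.Perm ℕ) ^ m) * braidPerm (k-1) (omegaOne k)) (2*n+1)
            = 2*(n - m) := by
          simp only [Equiv.Perm.mul_apply]
          rw [ho1top, hpow m n (by omega) (by omega)]
        rw [hcm] at hperm
        omega
  · rintro (rfl | rfl)
    · refine ⟨0, Or.inr ?_⟩
      simp [betaBraid, omegaOne, omegaTwo, descSigma, List.range_succ, List.range'_one]
    · refine ⟨1, Or.inl ?_⟩
      simp [betaBraid, omegaOne, omegaTwo, descSigma, List.range_succ, List.range'_one,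
        List.range'_succ, pow_one]
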